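/- Let X be an affine variety over an algebraically closed field K of characteristic zero, let f ∈ K[X] be a nonconstant regular function, and let k_2,...,k_m be positive integers. If K[X] admits a nonzero locally nilpotent derivation ∂, then the 1-weighted suspension Y = V(y_1 y_2^{k_2}···y_m^{k_m} − f) ⊂ K^m × X is not rigid: the map δ defined by δ(y_1) = ∂(f), δ(y_j) = 0 for j ≥ 2, and δ(g) = ∂(g)·y_2^{k_2}···y_m^{k_m} for g ∈ K[X], is a nonzero locally nilpotent derivation of K[Y]. -/

import Mathlib

set_option synthInstance.maxHeartbeats 1000000
set_option maxHeartbeats 1000000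

/-- A derivation is locally nilpotent if every element is annihilated by some power. -/
def IsLND {K A : Type*} [CommSemiring K] [CommRing A] [Algebra K A]
    (D : Derivation K A A) : Prop :=
  ∀ a : A, ∃ n : ℕ, (⇑D)^[n] a = 0

open MvPolynomial

noncomputable section AuxLND

variable {K A : Type*} [CommRing K] [CommRing A] [Algebra K A] {σ : Type*}

/-- The linear map applying a derivation coefficientwise on a multivariate polynomial. -/
def mvMCLin (D : Derivation K A A) : MvPolynomial σ A →ₗ[K] MvPolynomial σ A :=
  (AddMonoidAlgebra.coeffLinearEquiv K).symm.toLinearMap ∘ₗ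
    Finsupp.mapRange.linearMap (D : A →ₗ[K] A) ∘ₗ (AddMonoidAlgebra.coeffLinearEquiv K).toLinearMap

lemma mvMCLin_monomial (D : Derivation K A A) (s : σ →₀ ℕ) (a : A) :
    mvMCLin D (monomial s a) = monomial s (D a) := by
  show AddMonoidAlgebra.ofCoeff (Finsupp.mapRange (⇑D) (map_zero D) (Finsupp.single s a)) =
    AddMonoidAlgebra.ofCoeff (Finsupp.single s (D a))
  rw [Finsupp.mapRange_single]

/-- Coefficientwise application of a derivation is a derivation on `MvPolynomial σ A`. -/
def mvMapCoeffs (D : Derivation K A A) :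
    Derivation K (MvPolynomial σ A) (MvPolynomial σ A) where
  toLinearMap := mvMCLin D
  map_one_eq_zero' := by
    have h1 : (1 : MvPolynomial σ A) = monomial 0 1 := by
      rw [monomial_zero', C_1]
    show mvMCLin D 1 = 0
    rw [h1, mvMCLin_monomial, Derivation.map_one_eq_zero, monomial_zero]
  leibniz' p q := by
    show mvMCLin D (p * q) = p • mvMCLin D q + q • mvMCLin D p
    induction p using MvPolynomial.induction_on' with
    | add p1 p2 h1 h2 =>
      simp only [add_mul, map_add, h1, h2, smul_eq_mul]
      ring
    | monomial s a =>
      induction q using MvPolynomial.induction_on' with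
      | add q1 q2 h1 h2 =>
        simp only [mul_add, map_add, h1, h2, smul_eq_mul]
        ring
      | monomial t b =>
        rw [monomial_mul, mvMCLin_monomial, mvMCLin_monomial, mvMCLin_monomial,
          D.leibniz, map_add]
        simp only [smul_eq_mul, monomial_mul]
        rw [add_comm t s]

lemma mvMapCoeffs_monomial (D : Derivation K A A) (s : σ →₀ ℕ) (a : A) :
    mvMapCoeffs D (monomial s a) = monomial s (D a) :=
  mvMCLin_monomial D s a

lemma mvMapCoeffs_C (D : Derivation K A A) (a : A) :
    mvMapCoeffs D (C a : MvPolynomial σ A) = C (D a) := by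
  rw [C_apply, C_apply, mvMapCoeffs_monomial]

lemma mvMapCoeffs_X (D : Derivation K A A) (i : σ) :
    mvMapCoeffs D (X i : MvPolynomial σ A) = 0 := by
  rw [X, mvMapCoeffs_monomial, Derivation.map_one_eq_zero, monomial_zero]

variable {B : Type*} [CommRing B] [Algebra K B]

lemma der_prod_zero (d : Derivation K B B) {ι : Type*} (s : Finset ι) (g : ι → B)
    (h : ∀ i ∈ s, d (g i) = 0) : d (∏ i ∈ s, g i) = 0 := by
  classical
  induction s using Finset.cons_induction with
  | empty => simp
  | cons i s hi ih =>
    rw [Finset.prod_cons, d.leibniz, h i (Finset.mem_cons_self i s),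
      ih fun j hj => h j (Finset.mem_cons_of_mem hj)]
    simp

lemma der_iter_add (d : Derivation K B B) (n : ℕ) (x y : B) :
    (⇑d)^[n] (x + y) = (⇑d)^[n] x + (⇑d)^[n] y := by
  induction n generalizing x y with
  | zero => rfl
  | succ n ih =>
    rw [Function.iterate_succ_apply, Function.iterate_succ_apply,
      Function.iterate_succ_apply, map_add, ih]

lemma der_iter_zero (d : Derivation K B B) (n : ℕ) : (⇑d)^[n] (0 : B) = 0 := by
  induction n with
  | zero => rfl
  | succ n ih => rw [Function.iterate_succ_apply, map_zero, ih]

lemma der_iter_mono (d : Derivation K B B) {n m : ℕ} (h : n ≤ m) {x : B}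
    (hx : (⇑d)^[n] x = 0) : (⇑d)^[m] x = 0 := by
  obtain ⟨c, rfl⟩ := Nat.exists_eq_add_of_le h
  rw [add_comm, Function.iterate_add_apply, hx, der_iter_zero]

lemma der_iter_mul_zero (d : Derivation K B B) :
    ∀ (N : ℕ) (a b : B) (p q : ℕ), p + q = N → (⇑d)^[p] a = 0 → (⇑d)^[q] b = 0 →
      (⇑d)^[N] (a * b) = 0 := by
  intro N
  induction N using Nat.strong_induction_on with
  | _ N ih =>
    intro a b p q hpq ha hb
    match p, q with
    | 0, q =>
      simp only [Function.iterate_zero, id_eq] at ha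
      rw [ha, zero_mul, der_iter_zero]
    | p + 1, 0 =>
      simp only [Function.iterate_zero, id_eq] at hb
      rw [hb, mul_zero, der_iter_zero]
    | p + 1, q + 1 =>
      have hN : N = (p + q + 1) + 1 := by omega
      subst hN
      rw [Function.iterate_succ_apply, d.leibniz, smul_eq_mul, smul_eq_mul,
        der_iter_add]
      have h1 : (⇑d)^[p + q + 1] (a * d b) = 0 := by
        apply ih (p + q + 1) (by omega) a (d b) (p + 1) q (by omega) ha
        rw [← Function.iterate_succ_apply]
        exact hb
      have h2 : (⇑d)^[p + q + 1] (b * d a) = 0 := by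
        apply ih (p + q + 1) (by omega) b (d a) (q + 1) p (by omega) hb
        rw [← Function.iterate_succ_apply]
        exact ha
      rw [h1, h2, add_zero]

end AuxLND

theorem stmt10 {K A : Type*} [Field K] [IsAlgClosed K] [CharZero K]
    [CommRing A] [Algebra K A]
    (D : Derivation K A A) (hD : IsLND D) (hDne : D ≠ 0)
    (f : A) (hf : f ∉ Set.range (algebraMap K A))
    (m : ℕ) (k : Fin (m + 1) → ℕ) (hk1 : k 0 = 1) (hk : ∀ j, 0 < k j)
    (I : Ideal (MvPolynomial (Fin (m + 1)) A))
    (hI : I = Ideal.span {(∏ j, X j ^ k j) - C f})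
    (hirr : IsDomain (MvPolynomial (Fin (m + 1)) A ⧸ I)) :
    ∃ δ : Derivation K (MvPolynomial (Fin (m + 1)) A ⧸ I)
        (MvPolynomial (Fin (m + 1)) A ⧸ I),
      δ ≠ 0 ∧ IsLND δ ∧
      δ (Ideal.Quotient.mk I (X 0)) = Ideal.Quotient.mk I (C (D f)) ∧
      (∀ j : Fin (m + 1), j ≠ 0 → δ (Ideal.Quotient.mk I (X j)) = 0) ∧
      (∀ g : A, δ (Ideal.Quotient.mk I (C g)) =
        Ideal.Quotient.mk I (C (D g) * ∏ j ∈ Finset.univ.erase (0 : Fin (m + 1)), X j ^ k j)) := by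
  classical
  set P : MvPolynomial (Fin (m + 1)) A :=
    ∏ j ∈ Finset.univ.erase (0 : Fin (m + 1)), X j ^ k j with hP
  set F : MvPolynomial (Fin (m + 1)) A := (∏ j, X j ^ k j) - C f with hF
  set d : Derivation K (MvPolynomial (Fin (m + 1)) A) (MvPolynomial (Fin (m + 1)) A) :=
    (C (D f) : MvPolynomial (Fin (m + 1)) A) • ((pderiv (R := A) (0 : Fin (m + 1))).restrictScalars K) + P • (mvMapCoeffs (σ := Fin (m + 1)) D) with hd
  have hdapp : ∀ p, d p = C (D f) * pderiv 0 p + P * mvMapCoeffs D p := by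
    intro p
    rw [hd, Derivation.add_apply, Derivation.smul_apply, Derivation.smul_apply,
      Derivation.restrictScalars_apply, smul_eq_mul, smul_eq_mul]
  have hdC : ∀ g : A, d (C g) = C (D g) * P := by
    intro g
    rw [hdapp, pderiv_C, mul_zero, zero_add, mvMapCoeffs_C, mul_comm]
  have hdX : ∀ j : Fin (m + 1), j ≠ 0 → d (X j) = 0 := by
    intro j hj
    rw [hdapp, pderiv_X_of_ne hj, mvMapCoeffs_X, mul_zero, mul_zero, add_zero]
  have hdX0 : d (X 0) = C (D f) := by
    rw [hdapp, pderiv_X_self, mvMapCoeffs_X, mul_zero, add_zero, mul_one]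
  have hdP : d P = 0 := by
    rw [hP]
    refine der_prod_zero d _ _ fun j hj => ?_
    rw [Derivation.leibniz_pow, hdX j (Finset.mem_erase.mp hj).1, smul_zero, smul_zero]
  have hprod : (∏ j, X j ^ k j : MvPolynomial (Fin (m + 1)) A) = X 0 * P := by
    rw [hP, ← Finset.mul_prod_erase Finset.univ _ (Finset.mem_univ (0 : Fin (m + 1))),
      hk1, pow_one]
  have hdF : d F = 0 := by
    rw [hF, map_sub, hprod, d.leibniz, hdP, hdX0, hdC, smul_zero, smul_eq_mul,
      mul_comm]
    ring
  have hstab : ∀ p ∈ I, d p ∈ I := by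
    intro p hp
    rw [hI, Ideal.mem_span_singleton] at hp ⊢
    obtain ⟨q, rfl⟩ := hp
    rw [d.leibniz, hdF, smul_zero, add_zero, smul_eq_mul]
    exact Dvd.intro _ rfl
  -- the induced linear map on the quotient
  let δL : (MvPolynomial (Fin (m + 1)) A ⧸ I) →ₗ[K] (MvPolynomial (Fin (m + 1)) A ⧸ I) :=
    Submodule.liftQ (I.restrictScalars K)
      ((Ideal.Quotient.mkₐ K I).toLinearMap ∘ₗ d.toLinearMap)
      (by intro p hp; exact (Ideal.Quotient.eq_zero_iff_mem).mpr (hstab p hp))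
  have hδL : ∀ p, δL (Ideal.Quotient.mk I p) = Ideal.Quotient.mk I (d p) := fun p => rfl
  let δ : Derivation K (MvPolynomial (Fin (m + 1)) A ⧸ I)
      (MvPolynomial (Fin (m + 1)) A ⧸ I) :=
    { toLinearMap := δL
      map_one_eq_zero' := by
        show δL 1 = 0
        rw [show (1 : MvPolynomial (Fin (m + 1)) A ⧸ I) = Ideal.Quotient.mk I 1 from rfl,
          hδL, d.map_one_eq_zero, map_zero]
      leibniz' := by
        intro x y
        obtain ⟨p, rfl⟩ := Ideal.Quotient.mk_surjective x
        obtain ⟨q, rfl⟩ := Ideal.Quotient.mk_surjective y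
        show δL _ = _ • δL _ + _ • δL _
        rw [← map_mul, hδL, hδL, hδL, d.leibniz, map_add, smul_eq_mul, smul_eq_mul,
          map_mul, map_mul, smul_eq_mul, smul_eq_mul] }
  have hcomm : ∀ p, δ (Ideal.Quotient.mk I p) = Ideal.Quotient.mk I (d p) := hδL
  have hIter : ∀ (n : ℕ) (p), (⇑δ)^[n] (Ideal.Quotient.mk I p)
      = Ideal.Quotient.mk I ((⇑d)^[n] p) := by
    intro n
    induction n with
    | zero => intro p; rfl
    | succ n ih =>
      intro p
      rw [Function.iterate_succ_apply, Function.iterate_succ_apply, hcomm, ih]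
  have hCiter : ∀ (n : ℕ) (a : A), (⇑d)^[n] (C a) = C ((⇑D)^[n] a) * P ^ n := by
    intro n
    induction n with
    | zero => intro a; simp
    | succ n ih =>
      intro a
      rw [Function.iterate_succ_apply', ih, d.leibniz, Derivation.leibniz_pow, hdP,
        smul_zero, smul_zero, smul_zero, zero_add, hdC, smul_eq_mul,
        Function.iterate_succ_apply']
      ring
  have hLNDB : ∀ p : MvPolynomial (Fin (m + 1)) A, ∃ n, (⇑d)^[n] p = 0 := by
    intro p
    induction p using MvPolynomial.induction_on with
    | C a =>
      obtain ⟨n, hn⟩ := hD a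
      exact ⟨n, by rw [hCiter, hn, map_zero, zero_mul]⟩
    | add p q hp hq =>
      obtain ⟨n, hn⟩ := hp
      obtain ⟨r, hr⟩ := hq
      exact ⟨max n r, by
        rw [der_iter_add, der_iter_mono d (le_max_left n r) hn,
          der_iter_mono d (le_max_right n r) hr, add_zero]⟩
    | mul_X p i hp =>
      have hXi : ∃ n, (⇑d)^[n] (X i : MvPolynomial (Fin (m + 1)) A) = 0 := by
        by_cases hi : i = 0
        · subst hi
          obtain ⟨n, hn⟩ := hD (D f)
          refine ⟨n + 1, ?_⟩
          rw [Function.iterate_succ_apply, hdX0, hCiter, hn, map_zero, zero_mul]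
        · exact ⟨1, by simpa using hdX i hi⟩
      obtain ⟨n, hn⟩ := hp
      obtain ⟨q, hq⟩ := hXi
      exact ⟨n + q, der_iter_mul_zero d (n + q) p (X i) n q rfl hn hq⟩
  -- the evaluation map used to show nontriviality
  let ψ : MvPolynomial (Fin (m + 1)) A →ₐ[A] A :=
    aeval (fun j => if j = (0 : Fin (m + 1)) then f else 1)
  have hψP : ψ P = 1 := by
    rw [hP, map_prod]
    refine Finset.prod_eq_one fun j hj => ?_
    rw [map_pow, aeval_X, if_neg (Finset.ne_of_mem_erase hj), one_pow]
  have hψF : ψ F = 0 := by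
    rw [hF, map_sub, hprod, map_mul, aeval_X, if_pos rfl, hψP, aeval_C,
      Algebra.algebraMap_self_apply, mul_one, sub_self]
  obtain ⟨a, ha⟩ : ∃ a : A, D a ≠ 0 := by
    by_contra h
    push_neg at h
    exact hDne (by ext x; simp [h x])
  refine ⟨δ, ?_, ?_, ?_, ?_, ?_⟩
  · -- δ ≠ 0
    intro h0
    have h1 : δ (Ideal.Quotient.mk I (C a)) = 0 := by rw [h0]; rfl
    rw [hcomm, hdC, Ideal.Quotient.eq_zero_iff_mem, hI, Ideal.mem_span_singleton] at h1
    obtain ⟨q, hq⟩ := h1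
    have := congrArg ψ hq
    rw [map_mul, map_mul, hψP, hψF, aeval_C, Algebra.algebraMap_self_apply, mul_one,
      zero_mul] at this
    exact ha this
  · -- IsLND
    intro y
    obtain ⟨p, rfl⟩ := Ideal.Quotient.mk_surjective y
    obtain ⟨n, hn⟩ := hLNDB p
    exact ⟨n, by rw [hIter, hn, map_zero]⟩
  · rw [hcomm, hdX0]
  · intro j hj
    rw [hcomm, hdX j hj, map_zero]
  · intro g
    rw [hcomm, hdC]
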